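/- The bivariate generating function P(x,y) = Σ p_{n,k} xⁿ yᵏ, where p_{n,k} is the number of root-to-leaf paths with k edges in binary trees on n vertices, satisfies P(x,y) = x + 2xy·P(x,y) + 2xy·P(x,y)·T(x), where T(x) = (1 − 2x − √(1-4x))/(2x); consequently P(x,y) = x/(1 − y + y√(1-4x)). -/

import Mathlib

/-- Binary trees: every vertex has zero, one, or two children, where a
single child is distinguished as a left child or a right child. -/
inductive BTree : Type where
  | leaf : BTree
  | left : BTree → BTree
  | right : BTree → BTree
  | both : BTree → BTree → BTree

namespace BTree

/-- number of vertices -/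
def size : BTree → ℕ
  | .leaf => 1
  | .left t => 1 + size t
  | .right t => 1 + size t
  | .both l r => 1 + size l + size r

/-- the list of depths (numbers of edges from the root) of the leaves -/
def leafDepths : BTree → List ℕ
  | .leaf => [0]
  | .left t => (leafDepths t).map (· + 1)
  | .right t => (leafDepths t).map (· + 1)
  | .both l r => (leafDepths l).map (· + 1) ++ (leafDepths r).map (· + 1)

end BTree

/-- `p n k` is the number of root-to-leaf paths with `k` edges in binary trees
on `n` vertices. -/
noncomputable def p (n k : ℕ) : ℕ :=
  ∑ᶠ T : {T : BTree // T.size = n}, (T.1.leafDepths).count k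

/-- The bivariate generating function `P(x,y) = Σ p_{n,k} xⁿ yᵏ`. -/
noncomputable def P (x y : ℝ) : ℝ :=
  ∑' n : ℕ, ∑' k : ℕ, (p n k : ℝ) * x ^ n * y ^ k

namespace BTreeAux
open BTree

def height : BTree → ℕ
  | .leaf => 0
  | .left t => height t + 1
  | .right t => height t + 1
  | .both l r => max (height l) (height r) + 1

def enc : BTree → List (Fin 4)
  | .leaf => [0]
  | .left t => 1 :: enc t
  | .right t => 2 :: enc t
  | .both l r => 3 :: (enc l ++ enc r)

lemma enc_length : ∀ T : BTree, (enc T).length = T.size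
  | .leaf => rfl
  | .left t => by simp [enc, size, enc_length t, Nat.add_comm]
  | .right t => by simp [enc, size, enc_length t, Nat.add_comm]
  | .both l r => by
      simp [enc, size, enc_length l, enc_length r]; ring

lemma enc_cancel : ∀ T₁ T₂ : BTree, ∀ s₁ s₂ : List (Fin 4),
    enc T₁ ++ s₁ = enc T₂ ++ s₂ → T₁ = T₂ ∧ s₁ = s₂ := by
  intro T₁
  induction T₁ with
  | leaf => intro T₂ s₁ s₂ h; cases T₂ <;> simp [enc] at h <;> simp [h]
  | left t ih =>
      intro T₂ s₁ s₂ h; cases T₂ <;> simp [enc] at h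
      obtain ⟨h1, h2⟩ := ih _ _ _ h
      simp [h1, h2]
  | right t ih =>
      intro T₂ s₁ s₂ h; cases T₂ <;> simp [enc] at h
      obtain ⟨h1, h2⟩ := ih _ _ _ h
      simp [h1, h2]
  | both l r ihl ihr =>
      intro T₂ s₁ s₂ h; cases T₂ <;> simp [enc] at h
      rename_i l₂ r₂
      obtain ⟨h1, h2⟩ := ihl _ _ _ h
      obtain ⟨h3, h4⟩ := ihr _ _ _ h2
      simp [h1, h3, h4]

lemma enc_injective : Function.Injective enc := by
  intro a b h
  exact (enc_cancel a b [] [] (by simpa using h)).1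

lemma size_lt_two_pow : ∀ T : BTree, T.size < 2 ^ (height T + 1)
  | .leaf => by simp [size, height]
  | .left t => by
      have := size_lt_two_pow t
      simp only [size, height]
      have h2 : (2:ℕ) ^ (height t + 1) ≤ 2 ^ (height t + 1 + 1) :=
        Nat.pow_le_pow_right (by norm_num) (by omega)
      omega
  | .right t => by
      have := size_lt_two_pow t
      simp only [size, height]
      have h2 : (2:ℕ) ^ (height t + 1) ≤ 2 ^ (height t + 1 + 1) :=
        Nat.pow_le_pow_right (by norm_num) (by omega)
      omega
  | .both l r => by
      have hl := size_lt_two_pow l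
      have hr := size_lt_two_pow r
      simp only [size, height]
      have h2 : (2:ℕ) ^ (height l + 1) ≤ 2 ^ (max (height l) (height r) + 1) :=
        Nat.pow_le_pow_right (by norm_num) (by omega)
      have h3 : (2:ℕ) ^ (height r + 1) ≤ 2 ^ (max (height l) (height r) + 1) :=
        Nat.pow_le_pow_right (by norm_num) (by omega)
      have h4 : (2:ℕ) ^ (max (height l) (height r) + 1 + 1) =
          2 ^ (max (height l) (height r) + 1) + 2 ^ (max (height l) (height r) + 1) := by
        rw [pow_succ]; ring
      omega

lemma finite_size_eq (n : ℕ) : {T : BTree | T.size = n}.Finite := by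
  have : {T : BTree | T.size = n} ⊆ enc ⁻¹' {l : List (Fin 4) | l.length = n} := by
    intro T hT; simp only [Set.mem_preimage, Set.mem_setOf_eq, enc_length]; exact hT
  exact ((List.finite_length_eq (Fin 4) n).preimage (enc_injective.injOn)).subset this

lemma finite_height_le (k : ℕ) : {T : BTree | height T ≤ k}.Finite := by
  have : {T : BTree | height T ≤ k} ⊆ enc ⁻¹' {l : List (Fin 4) | l.length < 2 ^ (k+1)} := by
    intro T hT
    have hT' : height T ≤ k := hT
    simp only [Set.mem_preimage, Set.mem_setOf_eq, enc_length]
    calc T.size < 2 ^ (height T + 1) := size_lt_two_pow T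
      _ ≤ 2 ^ (k + 1) := Nat.pow_le_pow_right (by norm_num) (by omega)
  exact ((List.finite_length_lt (Fin 4) _).preimage (enc_injective.injOn)).subset this

end BTreeAux

namespace BTreeAux
open BTree

lemma left_injective : Function.Injective BTree.left := fun a b h => by injection h
lemma right_injective : Function.Injective BTree.right := fun a b h => by injection h
lemma both_injective : Function.Injective (fun q : BTree × BTree => BTree.both q.1 q.2) := by
  intro ⟨a, b⟩ ⟨c, d⟩ h
  simp only at h
  injection h with h1 h2
  simp [h1, h2]

/-- structural decomposition of a summable sum over binary trees -/
lemma tsum_decomp (f : BTree → ℝ) (hf : Summable f) :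
    ∑' T, f T = f .leaf + (∑' t, f (.left t)) + (∑' t, f (.right t))
      + ∑' q : BTree × BTree, f (.both q.1 q.2) := by
  set s₁ : Set BTree := {.leaf}
  set s₂ : Set BTree := Set.range BTree.left
  set s₃ : Set BTree := Set.range BTree.right
  set s₄ : Set BTree := Set.range (fun q : BTree × BTree => BTree.both q.1 q.2)
  have hsplit : ∀ T, f T = s₁.indicator f T + s₂.indicator f T
      + s₃.indicator f T + s₄.indicator f T := by
    intro T
    cases T with
    | leaf =>
        rw [Set.indicator_of_mem (by simp [s₁]), Set.indicator_of_notMem (by simp [s₂]),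
          Set.indicator_of_notMem (by simp [s₃]), Set.indicator_of_notMem (by simp [s₄])]
        ring
    | left t =>
        rw [Set.indicator_of_notMem (by simp [s₁]), Set.indicator_of_mem (by simp [s₂]),
          Set.indicator_of_notMem (by simp [s₃]), Set.indicator_of_notMem (by simp [s₄])]
        ring
    | right t =>
        rw [Set.indicator_of_notMem (by simp [s₁]), Set.indicator_of_notMem (by simp [s₂]),
          Set.indicator_of_mem (by simp [s₃]), Set.indicator_of_notMem (by simp [s₄])]
        ring
    | both l r =>
        rw [Set.indicator_of_notMem (by simp [s₁]), Set.indicator_of_notMem (by simp [s₂]),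
          Set.indicator_of_notMem (by simp [s₃]),
          Set.indicator_of_mem (show BTree.both l r ∈ s₄ from ⟨(l, r), rfl⟩)]
        ring
  have h1 : ∑' T, f T = (∑' T, s₁.indicator f T) + (∑' T, s₂.indicator f T)
      + (∑' T, s₃.indicator f T) + (∑' T, s₄.indicator f T) := by
    rw [← Summable.tsum_add (hf.indicator _) (hf.indicator _),
      ← Summable.tsum_add ((hf.indicator _).add (hf.indicator _)) (hf.indicator _),
      ← Summable.tsum_add (((hf.indicator _).add (hf.indicator _)).add (hf.indicator _)) (hf.indicator _)]
    exact tsum_congr hsplit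
  have e1 : ∑' T, s₁.indicator f T = f .leaf := by
    rw [tsum_eq_single BTree.leaf]
    · exact Set.indicator_of_mem (by simp [s₁]) f
    · intro b hb
      exact Set.indicator_of_notMem (by simp [s₁, hb]) f
  have e2 : ∑' T, s₂.indicator f T = ∑' t, f (.left t) := by
    rw [← left_injective.tsum_eq (f := s₂.indicator f) (Set.support_indicator_subset)]
    exact tsum_congr fun t => Set.indicator_of_mem (Set.mem_range_self t) f
  have e3 : ∑' T, s₃.indicator f T = ∑' t, f (.right t) := by
    rw [← right_injective.tsum_eq (f := s₃.indicator f) (Set.support_indicator_subset)]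
    exact tsum_congr fun t => Set.indicator_of_mem (Set.mem_range_self t) f
  have e4 : ∑' T, s₄.indicator f T = ∑' q : BTree × BTree, f (.both q.1 q.2) := by
    rw [← both_injective.tsum_eq (f := s₄.indicator f) (Set.support_indicator_subset)]
    exact tsum_congr fun q => Set.indicator_of_mem (Set.mem_range_self q) f
  rw [h1, e1, e2, e3, e4]

end BTreeAux

namespace BTreeAux
open BTree

noncomputable def wsum (y : ℝ) (T : BTree) : ℝ := ((T.leafDepths).map (y ^ ·)).sum

lemma wsum_leaf (y : ℝ) : wsum y .leaf = 1 := by simp [wsum, leafDepths]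

lemma list_shift (y : ℝ) (l : List ℕ) :
    ((l.map (· + 1)).map (y ^ ·)).sum = y * (l.map (y ^ ·)).sum := by
  induction l with
  | nil => simp
  | cons a l ih =>
      simp only [List.map_cons, List.sum_cons] at *
      rw [ih, pow_succ]; ring

lemma wsum_left (y : ℝ) (t : BTree) : wsum y (.left t) = y * wsum y t := by
  simp only [wsum, leafDepths]; rw [list_shift]

lemma wsum_right (y : ℝ) (t : BTree) : wsum y (.right t) = y * wsum y t := by
  simp only [wsum, leafDepths]; rw [list_shift]

lemma wsum_both (y : ℝ) (l r : BTree) :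
    wsum y (.both l r) = y * wsum y l + y * wsum y r := by
  simp only [wsum, leafDepths, List.map_append, List.sum_append]
  rw [list_shift, list_shift]

lemma abs_list_le (y : ℝ) (hy : |y| ≤ 1) (l : List ℕ) :
    |(l.map (y ^ ·)).sum| ≤ l.length := by
  induction l with
  | nil => simp
  | cons a l ih =>
      simp only [List.map_cons, List.sum_cons, List.length_cons]
      calc |y ^ a + (l.map (y ^ ·)).sum| ≤ |y ^ a| + |(l.map (y ^ ·)).sum| := abs_add_le _ _
        _ ≤ 1 + l.length := by
            gcongr
            rw [abs_pow]
            exact pow_le_one₀ (abs_nonneg y) hy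
        _ = (l.length + 1 : ℕ) := by push_cast; ring

lemma length_leafDepths_le : ∀ T : BTree, (T.leafDepths).length ≤ T.size
  | .leaf => by simp [leafDepths, size]
  | .left t => by simp [leafDepths, size]; have := length_leafDepths_le t; omega
  | .right t => by simp [leafDepths, size]; have := length_leafDepths_le t; omega
  | .both l r => by
      simp [leafDepths, size]
      have := length_leafDepths_le l; have := length_leafDepths_le r; omega

lemma depth_lt_size : ∀ T : BTree, ∀ d ∈ T.leafDepths, d < T.size := by
  intro T
  induction T with
  | leaf => intro d hd; simp [leafDepths] at hd; simp [hd, size]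
  | left t ih =>
      intro d hd; simp [leafDepths] at hd
      obtain ⟨a, ha, rfl⟩ := hd
      have := ih a ha; simp [size]; omega
  | right t ih =>
      intro d hd; simp [leafDepths] at hd
      obtain ⟨a, ha, rfl⟩ := hd
      have := ih a ha; simp [size]; omega
  | both l r ihl ihr =>
      intro d hd; simp [leafDepths] at hd
      rcases hd with ⟨a, ha, rfl⟩ | ⟨a, ha, rfl⟩
      · have := ihl a ha; simp [size]; omega
      · have := ihr a ha; simp [size]; omega

lemma abs_wsum_le (y : ℝ) (hy : |y| ≤ 1) (T : BTree) : |wsum y T| ≤ T.size :=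
  (abs_list_le y hy _).trans (by exact_mod_cast Nat.cast_le.2 (length_leafDepths_le T))

/-! ### height-truncated sums -/

noncomputable def hind (x : ℝ) (k : ℕ) (T : BTree) : ℝ :=
  if height T ≤ k then x ^ T.size else 0

lemma summable_hind (x : ℝ) (k : ℕ) : Summable (hind x k) := by
  apply summable_of_ne_finset_zero (s := (finite_height_le k).toFinset)
  intro T hT
  simp only [Set.Finite.mem_toFinset, Set.mem_setOf_eq] at hT
  simp [hind, hT]

lemma summable_hind_norm (x : ℝ) (k : ℕ) : Summable (fun T => ‖hind x k T‖) := by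
  apply summable_of_ne_finset_zero (s := (finite_height_le k).toFinset)
  intro T hT
  simp only [Set.Finite.mem_toFinset, Set.mem_setOf_eq] at hT
  simp [hind, hT]

lemma hind_nonneg {x : ℝ} (hx0 : 0 ≤ x) (k : ℕ) (T : BTree) : 0 ≤ hind x k T := by
  unfold hind; split
  · positivity
  · exact le_refl _

noncomputable def hseq (x : ℝ) (k : ℕ) : ℝ := ∑' T, hind x k T

lemma hseq_zero (x : ℝ) : hseq x 0 = x := by
  rw [hseq, tsum_decomp _ (summable_hind x 0)]
  have h1 : hind x 0 BTree.leaf = x := by simp [hind, height, size]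
  have h2 : ∀ t, hind x 0 (BTree.left t) = 0 := by intro t; simp [hind, height]
  have h3 : ∀ t, hind x 0 (BTree.right t) = 0 := by intro t; simp [hind, height]
  have h4 : ∀ q : BTree × BTree, hind x 0 (BTree.both q.1 q.2) = 0 := by
    intro q; simp [hind, height]
  simp only [h1, h2, h3, h4, tsum_zero]
  ring

lemma hseq_succ (x : ℝ) (k : ℕ) : hseq x (k + 1) = x * (1 + hseq x k) ^ 2 := by
  rw [hseq, tsum_decomp _ (summable_hind x (k+1))]
  have h1 : hind x (k+1) BTree.leaf = x := by simp [hind, height, size]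
  have h2 : ∀ t, hind x (k+1) (BTree.left t) = x * hind x k t := by
    intro t
    by_cases h : height t ≤ k <;>
      simp [hind, height, size, h, Nat.succ_le_succ_iff, pow_add, pow_one, mul_comm]
  have h3 : ∀ t, hind x (k+1) (BTree.right t) = x * hind x k t := by
    intro t
    by_cases h : height t ≤ k <;>
      simp [hind, height, size, h, Nat.succ_le_succ_iff, pow_add, pow_one, mul_comm]
  have h4 : ∀ q : BTree × BTree, hind x (k+1) (BTree.both q.1 q.2)
      = x * (hind x k q.1 * hind x k q.2) := by
    intro ⟨l, r⟩
    by_cases hl : height l ≤ k <;> by_cases hr : height r ≤ k <;>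
      simp [hind, height, size, hl, hr, Nat.succ_le_succ_iff, pow_add, pow_one] <;> ring
  rw [tsum_congr h2, tsum_congr h3, tsum_congr h4, tsum_mul_left, tsum_mul_left,
    ← tsum_mul_tsum_of_summable_norm (summable_hind_norm x k) (summable_hind_norm x k)]
  simp only [h1, hseq]
  ring

end BTreeAux

namespace BTreeAux
open BTree

section Params

variable {x : ℝ} (hx0 : 0 < x) (hx : x < 1 / 4)

noncomputable def rho (x : ℝ) : ℝ := (1 - 2 * x - Real.sqrt (1 - 4 * x)) / (2 * x)

lemma sqrt_sq' (hx : x < 1 / 4) : Real.sqrt (1 - 4 * x) ^ 2 = 1 - 4 * x :=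
  Real.sq_sqrt (by linarith)

lemma sqrt_pos' (hx : x < 1 / 4) : 0 < Real.sqrt (1 - 4 * x) :=
  Real.sqrt_pos.2 (by linarith)

lemma sqrt_le_one' (hx0 : 0 < x) : Real.sqrt (1 - 4 * x) ≤ 1 := by
  have h : Real.sqrt (1 - 4 * x) ≤ Real.sqrt 1 := Real.sqrt_le_sqrt (by linarith)
  simpa using h

include hx0 hx

lemma rho_nonneg : 0 ≤ rho x := by
  have h1 := sqrt_sq' (x := x) hx
  have h2 := (sqrt_pos' (x := x) hx).le
  rw [rho]
  apply div_nonneg _ (by linarith)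
  nlinarith

lemma rho_le_one : rho x ≤ 1 := by
  have h1 := sqrt_sq' (x := x) hx
  have h2 := (sqrt_pos' (x := x) hx).le
  have h3 := sqrt_le_one' (x := x) hx0
  rw [rho, div_le_one (by linarith)]
  nlinarith

lemma rho_fixed : rho x = x * (1 + rho x) ^ 2 := by
  have h1 := sqrt_sq' (x := x) hx
  have hne : (2 : ℝ) * x ≠ 0 := by positivity
  rw [rho]
  field_simp
  rw [mul_comm x 4]
  nlinarith [h1]

lemma hseq_le_rho : ∀ k, hseq x k ≤ rho x := by
  intro k
  induction k with
  | zero =>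
      rw [hseq_zero]
      have h := rho_fixed hx0 hx
      have hr := rho_nonneg hx0 hx
      nlinarith [mul_nonneg hx0.le hr, mul_nonneg (mul_nonneg hx0.le hr) hr]
  | succ k ih =>
      rw [hseq_succ]
      have h := rho_fixed hx0 hx
      have h0 : 0 ≤ hseq x k := tsum_nonneg (hind_nonneg hx0.le k)
      have hr := rho_nonneg hx0 hx
      nlinarith [mul_nonneg (mul_nonneg hx0.le (sub_nonneg.2 ih))
        (by linarith : (0:ℝ) ≤ 2 + rho x + hseq x k)]

lemma sum_finset_le (F : Finset BTree) : ∑ T ∈ F, x ^ T.size ≤ rho x := by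
  set k := F.sup height with hk
  have h1 : ∑ T ∈ F, x ^ T.size = ∑ T ∈ F, hind x k T := by
    apply Finset.sum_congr rfl
    intro T hT
    rw [hind, if_pos (Finset.le_sup (f := height) hT)]
  rw [h1]
  calc ∑ T ∈ F, hind x k T ≤ ∑' T, hind x k T :=
        Summable.sum_le_tsum F (fun T _ => hind_nonneg hx0.le k T) (summable_hind x k)
    _ ≤ rho x := hseq_le_rho hx0 hx k

lemma summable_g : Summable (fun T : BTree => x ^ T.size) := by
  apply summable_of_sum_le (fun T => by positivity)
  exact fun F => sum_finset_le hx0 hx F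

lemma S_le_rho : ∑' T : BTree, x ^ T.size ≤ rho x :=
  Summable.tsum_le_of_sum_le (summable_g hx0 hx) (fun F => sum_finset_le hx0 hx F)

lemma summable_g_norm : Summable (fun T : BTree => ‖x ^ T.size‖) := by
  refine (summable_g hx0 hx).congr fun T => ?_
  rw [Real.norm_eq_abs, abs_of_nonneg (by positivity)]

lemma S_fixed : (∑' T : BTree, x ^ T.size) = x * (1 + ∑' T : BTree, x ^ T.size) ^ 2 := by
  conv_lhs => rw [tsum_decomp _ (summable_g hx0 hx)]
  have h2 : ∀ t : BTree, x ^ (BTree.left t).size = x * x ^ t.size := by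
    intro t; rw [size, pow_add, pow_one]
  have h3 : ∀ t : BTree, x ^ (BTree.right t).size = x * x ^ t.size := by
    intro t; rw [size, pow_add, pow_one]
  have h4 : ∀ q : BTree × BTree, x ^ (BTree.both q.1 q.2).size
      = x * (x ^ q.1.size * x ^ q.2.size) := by
    intro q; rw [size, add_assoc, pow_add, pow_add, pow_one]
  rw [tsum_congr h2, tsum_congr h3, tsum_congr h4, tsum_mul_left, tsum_mul_left,
    ← tsum_mul_tsum_of_summable_norm (summable_g_norm hx0 hx) (summable_g_norm hx0 hx)]
  rw [show x ^ BTree.leaf.size = x by rw [size, pow_one]]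
  ring

lemma S_eq_rho : (∑' T : BTree, x ^ T.size) = rho x := by
  set S := ∑' T : BTree, x ^ T.size with hS
  have h1 : S = x * (1 + S) ^ 2 := S_fixed hx0 hx
  have h2 : rho x = x * (1 + rho x) ^ 2 := rho_fixed hx0 hx
  have hle : S ≤ rho x := S_le_rho hx0 hx
  rcases eq_or_lt_of_le hle with h | h
  · exact h
  exfalso
  have key : x * (S + rho x + 2) = 1 := by
    have hdiff : (rho x - S) * (x * (S + rho x + 2)) = (rho x - S) * 1 := by ring_nf; nlinarith [h1, h2]
    exact mul_left_cancel₀ (by linarith) hdiff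
  have hs := sqrt_pos' (x := x) hx
  have hrr : 2 * x * rho x = 1 - 2 * x - Real.sqrt (1 - 4 * x) := by
    rw [rho]; field_simp
  nlinarith [mul_lt_mul_of_pos_left h hx0]

end Params

end BTreeAux

namespace BTreeAux
open BTree

noncomputable def w (x y : ℝ) (T : BTree) : ℝ := x ^ T.size * wsum y T

section WSummable

variable {x y : ℝ} (hx0 : 0 < x) (hx : x < 1 / 4) (hy : |y| ≤ 1)

include hx0 hx hy

lemma summable_w_norm : Summable (fun T => ‖w x y T‖) := by
  set u : ℝ := (x + 1 / 4) / 2 with hu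
  have hu0 : 0 < u := by rw [hu]; linarith
  have hu4 : u < 1 / 4 := by rw [hu]; linarith
  have hxu : x < u := by rw [hu]; linarith
  set r : ℝ := x / u with hr
  have hr0 : 0 ≤ r := by positivity
  have hr1 : r < 1 := by rw [hr, div_lt_one hu0]; exact hxu
  have hsumn : Summable (fun n : ℕ => (n : ℝ) * r ^ n) := by
    have := summable_pow_mul_geometric_of_norm_lt_one 1
      (r := r) (by rwa [Real.norm_eq_abs, abs_of_nonneg hr0])
    exact this.congr fun n => by rw [pow_one]
  set C : ℝ := ∑' n : ℕ, (n : ℝ) * r ^ n with hC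
  have hCb : ∀ n : ℕ, (n : ℝ) * r ^ n ≤ C :=
    fun n => Summable.le_tsum hsumn n (fun j _ => by positivity)
  refine Summable.of_nonneg_of_le (fun T => norm_nonneg _)
    (f := fun T : BTree => C * u ^ T.size) (fun T => ?_)
    ((summable_g hu0 hu4).mul_left C)
  · 
    have h1 : ‖w x y T‖ = x ^ T.size * |wsum y T| := by
      rw [w, Real.norm_eq_abs, abs_mul, abs_of_nonneg (by positivity)]
    have h2 : x ^ T.size = r ^ T.size * u ^ T.size := by
      rw [← mul_pow, hr, div_mul_cancel₀ _ hu0.ne']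
    rw [h1, h2]
    calc r ^ T.size * u ^ T.size * |wsum y T|
        ≤ r ^ T.size * u ^ T.size * T.size := by
          have := abs_wsum_le y hy T
          have hnn : (0:ℝ) ≤ r ^ T.size * u ^ T.size := by positivity
          exact mul_le_mul_of_nonneg_left this hnn
      _ = ((T.size : ℝ) * r ^ T.size) * u ^ T.size := by ring
      _ ≤ C * u ^ T.size := by
          have := hCb T.size
          have : (T.size : ℝ) * r ^ T.size ≤ C := this
          have hupos : (0:ℝ) ≤ u ^ T.size := by positivity
          exact mul_le_mul_of_nonneg_right this hupos

lemma summable_w : Summable (w x y) :=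
  (summable_w_norm hx0 hx hy).of_norm

lemma Q_fixed :
    (∑' T, w x y T) = x + 2 * x * y * (∑' T, w x y T)
      + 2 * x * y * (∑' T, w x y T) * (∑' T : BTree, x ^ T.size) := by
  conv_lhs => rw [tsum_decomp _ (summable_w hx0 hx hy)]
  have h1 : w x y BTree.leaf = x := by
    rw [w, wsum_leaf, size, pow_one, mul_one]
  have h2 : ∀ t, w x y (BTree.left t) = (x * y) * w x y t := by
    intro t; rw [w, w, size, wsum_left, pow_add, pow_one]; ring
  have h3 : ∀ t, w x y (BTree.right t) = (x * y) * w x y t := by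
    intro t; rw [w, w, size, wsum_right, pow_add, pow_one]; ring
  have h4 : ∀ q : BTree × BTree, w x y (BTree.both q.1 q.2)
      = (x * y) * (w x y q.1 * x ^ q.2.size) + (x * y) * (x ^ q.1.size * w x y q.2) := by
    intro q
    rw [w, w, w, size, wsum_both, add_assoc, pow_add, pow_add, pow_one]
    ring
  rw [tsum_congr h2, tsum_congr h3, tsum_congr h4,
    Summable.tsum_add
      ((summable_mul_of_summable_norm (summable_w_norm hx0 hx hy)
        (summable_g_norm hx0 hx)).mul_left (x * y))
      ((summable_mul_of_summable_norm (summable_g_norm hx0 hx)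
        (summable_w_norm hx0 hx hy)).mul_left (x * y)),
    tsum_mul_left, tsum_mul_left, tsum_mul_left,
    ← tsum_mul_tsum_of_summable_norm (summable_w_norm hx0 hx hy) (summable_g_norm hx0 hx),
    ← tsum_mul_tsum_of_summable_norm (summable_g_norm hx0 hx) (summable_w_norm hx0 hx hy),
    h1]
  ring

end WSummable

lemma count_sum_eq (y : ℝ) : ∀ (l : List ℕ) (n : ℕ), (∀ d ∈ l, d < n) →
    ∑ k ∈ Finset.range n, (l.count k : ℝ) * y ^ k = (l.map (y ^ ·)).sum := by
  intro l
  induction l with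
  | nil => intro n _; simp
  | cons a l ih =>
      intro n hn
      have ha : a ∈ Finset.range n := Finset.mem_range.2 (hn a List.mem_cons_self)
      have step : ∀ k ∈ Finset.range n, ((a :: l).count k : ℝ) * y ^ k
          = (l.count k : ℝ) * y ^ k + (if k = a then y ^ k else 0) := by
        intro k _
        by_cases h : k = a <;> simp [List.count_cons, h, @eq_comm _ a k] <;> push_cast <;> ring
      rw [Finset.sum_congr rfl step, Finset.sum_add_distrib,
        Finset.sum_ite_eq' (Finset.range n) a (fun k => y ^ k), if_pos ha,
        ih n (fun d hd => hn d (List.mem_cons_of_mem a hd))]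
      simp only [List.map_cons, List.sum_cons]
      ring

noncomputable instance instFintypeSize (n : ℕ) : Fintype {T : BTree // T.size = n} :=
  Set.Finite.fintype (finite_size_eq n)

section Rearrange

variable {x y : ℝ}

lemma inner_eq (n : ℕ) :
    ∑' k : ℕ, (p n k : ℝ) * x ^ n * y ^ k
      = ∑' T : {T : BTree // T.size = n}, x ^ n * wsum y T.1 := by
  have hvanish : ∀ k ∉ Finset.range n, (p n k : ℝ) * x ^ n * y ^ k = 0 := by
    intro k hk
    have hk' : n ≤ k := by simpa using hk
    have hp : p n k = 0 := by
      rw [p, finsum_eq_sum_of_fintype]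
      apply Finset.sum_eq_zero
      intro T _
      rw [List.count_eq_zero]
      intro hmem
      have := depth_lt_size T.1 k hmem
      rw [T.2] at this
      omega
    rw [hp]; push_cast; ring
  rw [tsum_eq_sum hvanish]
  conv_rhs => rw [tsum_fintype]
  have hpe : ∀ k, (p n k : ℝ) = ∑ T : {T : BTree // T.size = n},
      ((T.1.leafDepths).count k : ℝ) := by
    intro k
    rw [p, finsum_eq_sum_of_fintype]
    push_cast
    rfl
  calc ∑ k ∈ Finset.range n, (p n k : ℝ) * x ^ n * y ^ k
      = ∑ k ∈ Finset.range n, ∑ T : {T : BTree // T.size = n},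
          ((T.1.leafDepths).count k : ℝ) * x ^ n * y ^ k := by
        apply Finset.sum_congr rfl
        intro k _
        rw [hpe k, Finset.sum_mul, Finset.sum_mul]
    _ = ∑ T : {T : BTree // T.size = n}, ∑ k ∈ Finset.range n,
          ((T.1.leafDepths).count k : ℝ) * x ^ n * y ^ k := Finset.sum_comm
    _ = ∑ T : {T : BTree // T.size = n}, x ^ n * wsum y T.1 := by
        apply Finset.sum_congr rfl
        intro T _
        have hl : ∀ d ∈ T.1.leafDepths, d < n := by
          intro d hd
          have := depth_lt_size T.1 d hd
          rw [T.2] at this; exact this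
        rw [show ∑ k ∈ Finset.range n, ((T.1.leafDepths).count k : ℝ) * x ^ n * y ^ k
            = x ^ n * ∑ k ∈ Finset.range n, ((T.1.leafDepths).count k : ℝ) * y ^ k by
          rw [Finset.mul_sum]; apply Finset.sum_congr rfl; intro k _; ring]
        rw [count_sum_eq y _ n hl, wsum]

def sigmaEquiv : (Σ n : ℕ, {T : BTree // T.size = n}) ≃ BTree where
  toFun q := q.2.1
  invFun T := ⟨T.size, T, rfl⟩
  left_inv := by rintro ⟨n, T, rfl⟩; rfl
  right_inv T := rfl

lemma P_eq_Q (hx0 : 0 < x) (hx : x < 1 / 4) (hy : |y| ≤ 1) :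
    P x y = ∑' T, w x y T := by
  have hs : Summable fun q : (Σ n : ℕ, {T : BTree // T.size = n}) => w x y (sigmaEquiv q) :=
    (summable_w hx0 hx hy).comp_injective sigmaEquiv.injective
  calc P x y = ∑' n : ℕ, ∑' T : {T : BTree // T.size = n}, x ^ n * wsum y T.1 := by
        rw [P]; exact tsum_congr fun n => inner_eq n
    _ = ∑' n : ℕ, ∑' T : {T : BTree // T.size = n}, w x y (sigmaEquiv ⟨n, T⟩) := by
        refine tsum_congr fun n => tsum_congr fun T => ?_
        show x ^ n * wsum y T.1 = w x y T.1
        rw [w, T.2]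
    _ = ∑' q : (Σ n : ℕ, {T : BTree // T.size = n}), w x y (sigmaEquiv q) :=
        (Summable.tsum_sigma' (fun n => Summable.of_finite) hs).symm
    _ = ∑' T, w x y T := sigmaEquiv.tsum_eq (w x y)

end Rearrange

end BTreeAux

theorem bivariate_gf_root_to_leaf_paths_binary_trees (x y : ℝ)
    (hx0 : 0 < x) (hx : x < 1 / 4) (hy : |y| ≤ 1) :
    P x y = x + 2 * x * y * P x y +
        2 * x * y * P x y * ((1 - 2 * x - Real.sqrt (1 - 4 * x)) / (2 * x)) ∧
      P x y = x / (1 - y + y * Real.sqrt (1 - 4 * x)) := by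
  have hPQ := BTreeAux.P_eq_Q (x := x) (y := y) hx0 hx hy
  have hQ := BTreeAux.Q_fixed (x := x) (y := y) hx0 hx hy
  have hS := BTreeAux.S_eq_rho hx0 hx
  rw [hS, BTreeAux.rho] at hQ
  have h1 : P x y = x + 2 * x * y * P x y +
      2 * x * y * P x y * ((1 - 2 * x - Real.sqrt (1 - 4 * x)) / (2 * x)) := by
    rw [hPQ]; exact hQ
  refine ⟨h1, ?_⟩
  have hs0 := BTreeAux.sqrt_pos' (x := x) hx
  have hs1 := BTreeAux.sqrt_le_one' (x := x) hx0
  have hy' := abs_le.1 hy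
  have hD : 0 < 1 - y + y * Real.sqrt (1 - 4 * x) := by
    nlinarith [mul_le_mul_of_nonneg_right hy'.2
      (by linarith : (0:ℝ) ≤ 1 - Real.sqrt (1 - 4 * x))]
  rw [eq_div_iff hD.ne']
  have key : (2 * x * y * P x y) * ((1 - 2 * x - Real.sqrt (1 - 4 * x)) / (2 * x))
      = y * P x y * (1 - 2 * x - Real.sqrt (1 - 4 * x)) := by
    field_simp
  rw [key] at h1
  linear_combination h1
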